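/- Assume G has the 4-cycle chord property and the 5-cycle chord property, the 10-cycle O is chordless, and w is a vertex of G whose images under the ten elements of the dihedral group generated by s and t are pairwise distinct. If w is adjacent to 7 consecutive vertices of O, then w is adjacent to 8 consecutive vertices of O. -/

import Mathlib

open Fin.NatCast

theorem stmt16 {V : Type*} (G : SimpleGraph V)
    (hchord4 : ∀ w1 w2 w3 w4 : V, G.Adj w1 w2 → G.Adj w2 w3 → G.Adj w3 w4 →
      G.Adj w4 w1 → w1 ≠ w3 → w2 ≠ w4 → G.Adj w1 w3 ∨ G.Adj w2 w4)
    (hchord5 : ∀ w1 w2 w3 w4 w5 : V,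
      ([w1, w2, w3, w4, w5] : List V).Pairwise (· ≠ ·) →
      G.Adj w1 w2 → G.Adj w2 w3 → G.Adj w3 w4 → G.Adj w4 w5 → G.Adj w5 w1 →
      G.Adj w1 w3 ∨ G.Adj w2 w4 ∨ G.Adj w3 w5 ∨ G.Adj w4 w1 ∨ G.Adj w5 w2)
    (s t : G ≃g G)
    (hss : ∀ z, s (s z) = z) (htt : ∀ z, t (t z) = z)
    (hst5 : ∀ z : V, s (t (s (t (s (t (s (t (s (t (z)))))))))) = z)
    (v : V) (hvs : G.Adj v (s v)) (hvt : G.Adj v (t v))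
    (hdist : ([v, s v, s (t v), s (t (s v)), s (t (s (t v))), s (t (s (t (s v)))), s (t (s (t (s (t v))))), s (t (s (t (s (t (s v)))))), s (t (s (t (s (t (s (t v))))))), s (t (s (t (s (t (s (t (s v))))))))] : List V).Pairwise (· ≠ ·))
    (o : Fin 10 → V) (ho : o = ![v, s v, s (t v), s (t (s v)), s (t (s (t v))), s (t (s (t (s v)))), s (t (s (t (s (t v))))), s (t (s (t (s (t (s v)))))), s (t (s (t (s (t (s (t v))))))), s (t (s (t (s (t (s (t (s v))))))))])
    (hchordless : ∀ i j : Fin 10, i ≠ j → j ≠ i + 1 → i ≠ j + 1 → ¬ G.Adj (o i) (o j))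
    (w : V) (hworbit : ([w, s w, s (t w), s (t (s w)), s (t (s (t w))), s (t (s (t (s w)))), s (t (s (t (s (t w))))), s (t (s (t (s (t (s w)))))), s (t (s (t (s (t (s (t w))))))), s (t (s (t (s (t (s (t (s w))))))))] : List V).Pairwise (· ≠ ·))
    (hyp : ∃ i : Fin 10, ∀ m : ℕ, m < 7 → G.Adj w (o (i + (m : Fin 10)))) :
    ∃ i : Fin 10, ∀ m : ℕ, m < 8 → G.Adj w (o (i + (m : Fin 10))) := by
  obtain ⟨i, hi⟩ := hyp
  have mapS : ∀ {a b : V}, G.Adj a b → G.Adj (s a) (s b) := fun h => s.map_adj_iff.mpr h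
  have mapT : ∀ {a b : V}, G.Adj a b → G.Adj (t a) (t b) := fun h => t.map_adj_iff.mpr h
  have o0 : o 0 = v := by rw [ho]; rfl
  have o1 : o 1 = s v := by rw [ho]; rfl
  have o2 : o 2 = s (t v) := by rw [ho]; rfl
  have o3 : o 3 = s (t (s v)) := by rw [ho]; rfl
  have o4 : o 4 = s (t (s (t v))) := by rw [ho]; rfl
  have o5 : o 5 = s (t (s (t (s v)))) := by rw [ho]; rfl
  have o6 : o 6 = s (t (s (t (s (t v))))) := by rw [ho]; rfl
  have o7 : o 7 = s (t (s (t (s (t (s v)))))) := by rw [ho]; rfl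
  have o8 : o 8 = s (t (s (t (s (t (s (t v))))))) := by rw [ho]; rfl
  have o9 : o 9 = s (t (s (t (s (t (s (t (s v)))))))) := by rw [ho]; rfl
  have hsto : ∀ k : Fin 10, s (t (o k)) = o (k + 2) := by
    intro k
    fin_cases k
    · show s (t (o 0)) = o 2; rw [o0, o2]
    · show s (t (o 1)) = o 3; rw [o1, o3]
    · show s (t (o 2)) = o 4; rw [o2, o4]
    · show s (t (o 3)) = o 5; rw [o3, o5]
    · show s (t (o 4)) = o 6; rw [o4, o6]
    · show s (t (o 5)) = o 7; rw [o5, o7]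
    · show s (t (o 6)) = o 8; rw [o6, o8]
    · show s (t (o 7)) = o 9; rw [o7, o9]
    · show s (t (o 8)) = o 0; rw [o8, o0]; exact hst5 v
    · show s (t (o 9)) = o 1; rw [o9, o1]; exact hst5 (s v)
  have hedge : ∀ k : Fin 10, G.Adj (o k) (o (k + 1)) := by
    intro k
    fin_cases k
    · show G.Adj (o 0) (o 1); rw [o0, o1]; exact hvs
    · show G.Adj (o 1) (o 2); rw [o1, o2]; exact mapS hvt
    · show G.Adj (o 2) (o 3); rw [o2, o3]; exact mapS (mapT hvs)
    · show G.Adj (o 3) (o 4); rw [o3, o4]; exact mapS (mapT (mapS hvt))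
    · show G.Adj (o 4) (o 5); rw [o4, o5]; exact mapS (mapT (mapS (mapT hvs)))
    · show G.Adj (o 5) (o 6); rw [o5, o6]; exact mapS (mapT (mapS (mapT (mapS hvt))))
    · show G.Adj (o 6) (o 7); rw [o6, o7]; exact mapS (mapT (mapS (mapT (mapS (mapT hvs)))))
    · show G.Adj (o 7) (o 8); rw [o7, o8]; exact mapS (mapT (mapS (mapT (mapS (mapT (mapS hvt))))))
    · show G.Adj (o 8) (o 9); rw [o8, o9]; exact mapS (mapT (mapS (mapT (mapS (mapT (mapS (mapT hvs)))))))
    · show G.Adj (o 9) (o 0)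
      rw [o9, o0]
      have h := mapS (mapT (mapS (mapT (mapS (mapT (mapS (mapT (mapS hvt))))))))
      rwa [hst5 v] at h
  have oinj : Function.Injective o := by
    rw [← List.nodup_ofFn]
    have : List.ofFn o = [v, s v, s (t v), s (t (s v)), s (t (s (t v))), s (t (s (t (s v)))), s (t (s (t (s (t v))))), s (t (s (t (s (t (s v)))))), s (t (s (t (s (t (s (t v))))))), s (t (s (t (s (t (s (t (s v))))))))] := by
      rw [ho]
      simp [List.ofFn_succ]
    rw [this]
    exact hdist
  have hi' : ∀ c : Fin 10, c.val < 7 → G.Adj w (o (i + c)) := fun c hc => by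
    have := hi c.val hc
    rwa [Fin.cast_val_eq_self] at this
  have aa : ∀ a b : Fin 10, i + a + b = i + (a + b) := fun a b => add_assoc i a b
  have one : ∀ a b : Fin 10, a ≠ b → o (i + a) ≠ o (i + b) := fun a b h e => h (add_left_cancel (oinj e))
  have hcl : ∀ a b : Fin 10, a ≠ b → b ≠ a + 1 → a ≠ b + 1 → ¬ G.Adj (o (i + a)) (o (i + b)) := by
    intro a b h1 h2 h3
    apply hchordless
    · exact fun e => h1 (add_left_cancel e)
    · rw [aa]; exact fun e => h2 (add_left_cancel e)
    · rw [aa]; exact fun e => h3 (add_left_cancel e)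
  have hts4 : ∀ u : V, t (s u) = s (t (s (t (s (t (s (t u))))))) := by
    intro u
    have h := hst5 (t (s u))
    rw [htt, hss] at h
    exact h.symm
  have htso : ∀ k : Fin 10, t (s (o k)) = o (k + 8) := by
    intro k
    rw [hts4, hsto, hsto, hsto, hsto]
    congr 1
    rw [add_assoc, add_assoc, add_assoc]
    congr 1
  -- adjacencies of w on the arc
  have a0 : G.Adj w (o (i + 0)) := hi' 0 (by decide)
  have a1 : G.Adj w (o (i + 1)) := hi' 1 (by decide)
  have a3 : G.Adj w (o (i + 3)) := hi' 3 (by decide)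
  have a5 : G.Adj w (o (i + 5)) := hi' 5 (by decide)
  have a6 : G.Adj w (o (i + 6)) := hi' 6 (by decide)
  -- adjacencies of z = t (s w)
  have hz8 : G.Adj (t (s w)) (o (i + 8)) := by
    have h := mapT (mapS a0)
    rwa [htso, aa, show ((0:Fin 10) + 8) = 8 from by decide] at h
  have hz1 : G.Adj (t (s w)) (o (i + 1)) := by
    have h := mapT (mapS a3)
    rwa [htso, aa, show ((3:Fin 10) + 8) = 1 from by decide] at h
  have hz3 : G.Adj (t (s w)) (o (i + 3)) := by
    have h := mapT (mapS a5)
    rwa [htso, aa, show ((5:Fin 10) + 8) = 3 from by decide] at h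
  have hwz_ne : w ≠ t (s w) := by
    rw [hts4]
    have h := hworbit
    simp only [List.pairwise_cons, List.mem_cons, List.not_mem_nil, or_false] at h
    exact h.1 _ (by tauto)
  have hwz : G.Adj w (t (s w)) := by
    rcases hchord4 w (o (i + 1)) (t (s w)) (o (i + 3)) a1 hz1.symm hz3 a3.symm hwz_ne
      (one 1 3 (by decide)) with h | h
    · exact h
    · exact absurd h (hcl 1 3 (by decide) (by decide) (by decide))
  have e67 : G.Adj (o (i + 6)) (o (i + 7)) := by
    have h := hedge (i + 6)
    rwa [aa, show ((6:Fin 10) + 1) = 7 from by decide] at h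
  have e78 : G.Adj (o (i + 7)) (o (i + 8)) := by
    have h := hedge (i + 7)
    rwa [aa, show ((7:Fin 10) + 1) = 8 from by decide] at h
  have hw7 : w ≠ o (i + 7) := by
    intro e
    exact hcl 7 1 (by decide) (by decide) (by decide) (by rw [← e]; exact a1)
  have hw8 : w ≠ o (i + 8) := by
    intro e
    exact hcl 8 6 (by decide) (by decide) (by decide) (by rw [← e]; exact a6)
  have finishA : G.Adj w (o (i + 7)) → ∃ j : Fin 10, ∀ m : ℕ, m < 8 → G.Adj w (o (j + (m : Fin 10))) := by
    intro h
    refine ⟨i, fun m hm => ?_⟩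
    by_cases hm7 : m < 7
    · exact hi m hm7
    · have hm8 : m = 7 := by omega
      subst hm8
      rwa [show ((7:ℕ) : Fin 10) = 7 from by decide]
  have finishC : G.Adj w (o (i + 9)) → ∃ j : Fin 10, ∀ m : ℕ, m < 8 → G.Adj w (o (j + (m : Fin 10))) := by
    intro h
    refine ⟨i + 9, fun m hm => ?_⟩
    interval_cases m
    · rwa [show ((0:ℕ) : Fin 10) = 0 from by decide, add_zero]
    · rw [add_assoc, show ((9:Fin 10) + ((1:ℕ):Fin 10)) = 0 from by decide]; exact hi' 0 (by decide)
    · rw [add_assoc, show ((9:Fin 10) + ((2:ℕ):Fin 10)) = 1 from by decide]; exact hi' 1 (by decide)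
    · rw [add_assoc, show ((9:Fin 10) + ((3:ℕ):Fin 10)) = 2 from by decide]; exact hi' 2 (by decide)
    · rw [add_assoc, show ((9:Fin 10) + ((4:ℕ):Fin 10)) = 3 from by decide]; exact hi' 3 (by decide)
    · rw [add_assoc, show ((9:Fin 10) + ((5:ℕ):Fin 10)) = 4 from by decide]; exact hi' 4 (by decide)
    · rw [add_assoc, show ((9:Fin 10) + ((6:ℕ):Fin 10)) = 5 from by decide]; exact hi' 5 (by decide)
    · rw [add_assoc, show ((9:Fin 10) + ((7:ℕ):Fin 10)) = 6 from by decide]; exact hi' 6 (by decide)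
  by_cases c7 : G.Adj w (o (i + 7))
  · exact finishA c7
  by_cases c9 : G.Adj w (o (i + 9))
  · exact finishC c9
  by_cases c8 : G.Adj w (o (i + 8))
  · rcases hchord4 w (o (i + 6)) (o (i + 7)) (o (i + 8)) a6 e67 e78 c8.symm hw7
      (one 6 8 (by decide)) with h | h
    · exact finishA h
    · exact absurd h (hcl 6 8 (by decide) (by decide) (by decide))
  · have hpw : ([w, o (i + 6), o (i + 7), o (i + 8), t (s w)] : List V).Pairwise (· ≠ ·) := by
      refine List.Pairwise.cons ?_ (List.Pairwise.cons ?_ (List.Pairwise.cons ?_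
        (List.Pairwise.cons ?_ (List.Pairwise.cons
          (fun a ha => absurd ha List.not_mem_nil) List.Pairwise.nil))))
      · intro a ha
        simp only [List.mem_cons, List.not_mem_nil, or_false] at ha
        rcases ha with rfl | rfl | rfl | rfl
        · exact a6.ne
        · exact hw7
        · exact hw8
        · exact hwz_ne
      · intro a ha
        simp only [List.mem_cons, List.not_mem_nil, or_false] at ha
        rcases ha with rfl | rfl | rfl
        · exact one 6 7 (by decide)
        · exact one 6 8 (by decide)
        · intro e
          exact hcl 6 8 (by decide) (by decide) (by decide) (by rw [e]; exact hz8)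
      · intro a ha
        simp only [List.mem_cons, List.not_mem_nil, or_false] at ha
        rcases ha with rfl | rfl
        · exact one 7 8 (by decide)
        · intro e
          exact hcl 7 1 (by decide) (by decide) (by decide) (by rw [e]; exact hz1)
      · intro a ha
        simp only [List.mem_cons, List.not_mem_nil, or_false] at ha
        rcases ha with rfl
        exact hz8.ne'
    rcases hchord5 w (o (i + 6)) (o (i + 7)) (o (i + 8)) (t (s w)) hpw a6 e67 e78
      hz8.symm hwz.symm with h | h | h | h | h
    · exact absurd h c7
    · exact absurd h (hcl 6 8 (by decide) (by decide) (by decide))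
    · exfalso
      apply c9
      have h2 := mapS (mapT h)
      rw [htt, hss, hsto, aa, show ((7:Fin 10) + 2) = 9 from by decide] at h2
      exact h2.symm
    · exact absurd h.symm c8
    · exfalso
      apply c8
      have h2 := mapS (mapT h)
      rw [htt, hss, hsto, aa, show ((6:Fin 10) + 2) = 8 from by decide] at h2
      exact h2
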